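/- Let f = αx² + βxy + γy² be an integral primitive binary quadratic form with Δ(f) ≠ 0. Let s = 8 if Δ(f) is odd and s = 1 if Δ(f) is even. If α ≠ 0, then the subgroup Λ₁ of ℤ³ consisting of all triples (A,B,C) such that 2α² divides 4βγA − (β²+2αγ)B + 2αβC and 8α³ divides 4γ(β²+2αγ)A − β(β²+4αγ)B + 2αβ²C has index s·|α|³ in ℤ³. If β ≠ 0 and β² + 4αγ ≠ 0, then the subgroup Λ₂ of ℤ³ consisting of all triples (A,B,C) such that β(β²+4αγ) divides γ(4β²+8αγ)A + 2αβ²B − 8α³C and β(β²+4αγ) divides 8γ³A − 2β²γB − α(4β²+8αγ)C has index s·|β(β²+4αγ)|/8 in ℤ³. -/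

import Mathlib

/-- The lattice `Λ₁` attached to `f = a x² + b xy + c y²` (the image of the lattice
of integral quartic forms fixed by `M_f` under the first three coefficients). -/
def lat1 (a b c : ℤ) : AddSubgroup (ℤ × ℤ × ℤ) where
  carrier := {p | 2*a^2 ∣ 4*b*c*p.1 - (b^2 + 2*a*c)*p.2.1 + 2*a*b*p.2.2 ∧
                  8*a^3 ∣ 4*c*(b^2 + 2*a*c)*p.1 - b*(b^2 + 4*a*c)*p.2.1 + 2*a*b^2*p.2.2}
  zero_mem' := by simp
  add_mem' := by
    rintro p q ⟨h1, h2⟩ ⟨g1, g2⟩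
    refine ⟨?_, ?_⟩
    · have h := dvd_add h1 g1
      convert h using 1
      on_goal 1 => rfl
      simp only [Prod.fst_add, Prod.snd_add]
      ring
    · have h := dvd_add h2 g2
      convert h using 1
      on_goal 1 => rfl
      simp only [Prod.fst_add, Prod.snd_add]
      ring
  neg_mem' := by
    rintro p ⟨h1, h2⟩
    refine ⟨?_, ?_⟩
    · have h := (dvd_neg (α := ℤ)).mpr h1
      convert h using 1
      on_goal 1 => rfl
      simp only [Prod.fst_neg, Prod.snd_neg]
      ring
    · have h := (dvd_neg (α := ℤ)).mpr h2
      convert h using 1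
      on_goal 1 => rfl
      simp only [Prod.fst_neg, Prod.snd_neg]
      ring

/-- The lattice `Λ₂` attached to `f = a x² + b xy + c y²` (the image of the lattice
of integral quartic forms fixed by `M_f` under the coefficients `(a₄, a₂, a₀)`). -/
def lat2 (a b c : ℤ) : AddSubgroup (ℤ × ℤ × ℤ) where
  carrier := {p | b*(b^2 + 4*a*c) ∣ c*(4*b^2 + 8*a*c)*p.1 + 2*a*b^2*p.2.1 - 8*a^3*p.2.2 ∧
                  b*(b^2 + 4*a*c) ∣ 8*c^3*p.1 - 2*b^2*c*p.2.1 - a*(4*b^2 + 8*a*c)*p.2.2}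
  zero_mem' := by simp
  add_mem' := by
    rintro p q ⟨h1, h2⟩ ⟨g1, g2⟩
    refine ⟨?_, ?_⟩
    · have h := dvd_add h1 g1
      convert h using 1
      on_goal 1 => rfl
      simp only [Prod.fst_add, Prod.snd_add]
      ring
    · have h := dvd_add h2 g2
      convert h using 1
      on_goal 1 => rfl
      simp only [Prod.fst_add, Prod.snd_add]
      ring
  neg_mem' := by
    rintro p ⟨h1, h2⟩
    refine ⟨?_, ?_⟩
    · have h := (dvd_neg (α := ℤ)).mpr h1
      convert h using 1
      on_goal 1 => rfl
      simp only [Prod.fst_neg, Prod.snd_neg]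
      ring
    · have h := (dvd_neg (α := ℤ)).mpr h2
      convert h using 1
      on_goal 1 => rfl
      simp only [Prod.fst_neg, Prod.snd_neg]
      ring

private def dz (x y : ℤ × ℤ) : ℤ := x.1 * y.2 - x.2 * y.1

private lemma dz_dvd_closure {S : Set (ℤ × ℤ)} {t : ℤ}
    (hS : ∀ x ∈ S, ∀ y ∈ S, t ∣ dz x y) :
    ∀ x ∈ AddSubgroup.closure S, ∀ y ∈ AddSubgroup.closure S, t ∣ dz x y := by
  have step : ∀ x ∈ S, ∀ y ∈ AddSubgroup.closure S, t ∣ dz x y := by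
    intro x hx y hy
    refine AddSubgroup.closure_induction (p := fun g _ => t ∣ dz x g)
      (fun z hz => hS x hx z hz) ?_ ?_ ?_ hy
    · simpa [dz] using dvd_zero t
    · intro y z _ _ h1 h2
      have : dz x (y + z) = dz x y + dz x z := by
        simp [dz, Prod.fst_add, Prod.snd_add]; ring
      rw [this]; exact dvd_add h1 h2
    · intro y _ h1
      have : dz x (-y) = -dz x y := by simp [dz]; ring
      rw [this]; exact dvd_neg.mpr h1
  intro x hx y hy
  refine AddSubgroup.closure_induction (p := fun g _ => t ∣ dz g y)
    (fun z hz => step z hz y hy) ?_ ?_ ?_ hx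
  · simpa [dz] using dvd_zero t
  · intro u v _ _ h1 h2
    have : dz (u + v) y = dz u y + dz v y := by
      simp [dz, Prod.fst_add, Prod.snd_add]; ring
    rw [this]; exact dvd_add h1 h2
  · intro u _ h1
    have : dz (-u) y = -dz u y := by simp [dz]; ring
    rw [this]; exact dvd_neg.mpr h1

open AddSubgroup in
private lemma index_closure_eq (S : Set (ℤ × ℤ)) (t : ℕ)
    (hne : ∃ x ∈ S, ∃ y ∈ S, dz x y ≠ 0)
    (H1 : ∀ x ∈ S, ∀ y ∈ S, (t : ℤ) ∣ dz x y)
    (H2 : ∀ u : ℕ, (∀ x ∈ S, ∀ y ∈ S, (u : ℤ) ∣ dz x y) → u ∣ t) :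
    (AddSubgroup.closure S).index = t := by
  classical
  set L := AddSubgroup.closure S with hLdef
  set N := AddSubgroup.toIntSubmodule L with hN
  obtain ⟨n, snf⟩ := N.smithNormalForm (Module.Basis.finTwoProd ℤ)
  have hidx : L.index = Nat.card ℤ ^ (2 - n) *
      ∏ i : Fin n, (Ideal.span {snf.a i}).toAddSubgroup.index := by
    have h := snf.toAddSubgroup_index_eq_pow_mul_prod
    simp only [Fintype.card_fin] at h
    exact h
  have hn2 : n ≤ 2 := by simpa using Fintype.card_le_of_embedding snf.f
  have hmemL : ∀ x ∈ S, x ∈ L := fun x hx => subset_closure hx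
  have hrep : ∀ x ∈ L, ∃ r : Fin n → ℤ, x = ∑ i, r i • (snf.bN i : ℤ × ℤ) := by
    intro x hx
    have hxN : x ∈ N := hx
    refine ⟨fun i => snf.bN.repr ⟨x, hxN⟩ i, ?_⟩
    have h := congrArg Subtype.val (snf.bN.sum_repr ⟨x, hxN⟩)
    simp only [Submodule.coe_sum, Submodule.coe_smul] at h
    exact h.symm
  by_cases hn : n = 2
  · subst hn
    set x0 := (snf.bN 0 : ℤ × ℤ) with hx0
    set x1 := (snf.bN 1 : ℤ × ℤ) with hx1
    have hx0L : x0 ∈ L := (snf.bN 0).2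
    have hx1L : x1 ∈ L := (snf.bN 1).2
    have hval : L.index = (snf.a 0 * snf.a 1).natAbs := by
      rw [hidx]
      simp [Ideal.span_singleton_toAddSubgroup_eq_zmultiples, Int.index_zmultiples,
        Fin.prod_univ_two, Int.natAbs_mul]
    -- the bM basis has unit determinant
    have hu : ∀ u v : Fin 2, u ≠ v → (dz (snf.bM u) (snf.bM v)).natAbs = 1 := by
      have h1 := snf.bM.sum_repr (1, 0)
      have h2 := snf.bM.sum_repr (0, 1)
      rw [Fin.sum_univ_two] at h1 h2
      set p := snf.bM 0
      set q := snf.bM 1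
      set α := snf.bM.repr (1, 0) 0
      set β := snf.bM.repr (1, 0) 1
      set γ := snf.bM.repr (0, 1) 0
      set δ := snf.bM.repr (0, 1) 1
      have e1 : α * p.1 + β * q.1 = 1 := by
        have := congrArg Prod.fst h1; simpa [Prod.fst_add, smul_eq_mul] using this
      have e2 : α * p.2 + β * q.2 = 0 := by
        have := congrArg Prod.snd h1; simpa [Prod.snd_add, smul_eq_mul] using this
      have e3 : γ * p.1 + δ * q.1 = 0 := by
        have := congrArg Prod.fst h2; simpa [Prod.fst_add, smul_eq_mul] using this
      have e4 : γ * p.2 + δ * q.2 = 1 := by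
        have := congrArg Prod.snd h2; simpa [Prod.snd_add, smul_eq_mul] using this
      have key : (α * δ - β * γ) * dz p q = 1 := by
        have expand : (α * δ - β * γ) * dz p q =
            (α * p.1 + β * q.1) * (γ * p.2 + δ * q.2) -
            (α * p.2 + β * q.2) * (γ * p.1 + δ * q.1) := by
          simp only [dz]; ring
        rw [expand, e1, e2, e3, e4]; ring
      have hpq : (dz p q).natAbs = 1 := by
        have : dz p q ∣ 1 := Dvd.intro_left _ key
        exact Nat.dvd_one.mp (by simpa using Int.natAbs_dvd_natAbs.mpr this)
      have hqp : (dz q p).natAbs = 1 := by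
        have : dz q p = -dz p q := by simp [dz]; ring
        rw [this, Int.natAbs_neg]; exact hpq
      intro u v huv
      have hcase : (u = 0 ∧ v = 1) ∨ (u = 1 ∧ v = 0) := by
        revert huv; revert u v; decide
      rcases hcase with ⟨hu0, hv1⟩ | ⟨hu1, hv0⟩
      · rw [hu0, hv1]; exact hpq
      · rw [hu1, hv0]; exact hqp
    have hfne : snf.f 0 ≠ snf.f 1 := fun h => absurd (snf.f.injective h) (by decide)
    have hdet : dz x0 x1 = snf.a 0 * snf.a 1 *
        dz (snf.bM (snf.f 0)) (snf.bM (snf.f 1)) := by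
      rw [hx0, hx1, snf.snf 0, snf.snf 1]
      simp only [dz, Prod.smul_fst, Prod.smul_snd, smul_eq_mul]; ring
    have hL_eq : L.index = (dz x0 x1).natAbs := by
      rw [hval, hdet, Int.natAbs_mul, Int.natAbs_mul, hu _ _ hfne, Int.natAbs_mul]
      ring
    have hdvd_all : ∀ x ∈ L, ∀ y ∈ L, dz x0 x1 ∣ dz x y := by
      intro x hx y hy
      obtain ⟨r, hr⟩ := hrep x hx
      obtain ⟨q, hq⟩ := hrep y hy
      rw [Fin.sum_univ_two] at hr hq
      refine ⟨r 0 * q 1 - r 1 * q 0, ?_⟩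
      rw [hr, hq]
      simp only [dz, Prod.fst_add, Prod.snd_add, Prod.smul_fst, Prod.smul_snd, smul_eq_mul]
      ring
    refine Nat.dvd_antisymm ?_ ?_
    · apply H2
      intro x hx y hy
      rw [hL_eq]
      exact Int.natAbs_dvd.mpr (hdvd_all _ (hmemL x hx) _ (hmemL y hy))
    · rw [hL_eq]
      have h := dz_dvd_closure (S := S) (t := (t : ℤ)) H1 _ hx0L _ hx1L
      simpa using Int.natAbs_dvd_natAbs.mpr h
  · exfalso
    obtain ⟨xx, hxx, yy, hyy, hij⟩ := hne
    apply hij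
    obtain ⟨r, hr⟩ := hrep _ (hmemL xx hxx)
    obtain ⟨q, hq⟩ := hrep _ (hmemL yy hyy)
    interval_cases n
    · simp only [Finset.univ_eq_empty, Finset.sum_empty] at hr hq
      rw [hr, hq]; simp [dz]
    · rw [Fin.sum_univ_one] at hr hq
      rw [hr, hq]
      simp only [dz, Prod.smul_fst, Prod.smul_snd, smul_eq_mul]
      ring
    · exact absurd rfl hn

open AddSubgroup in
private lemma index_mul_index (L : AddSubgroup (ℤ × ℤ × ℤ)) (c1 c2 c3 d1 d2 d3 m1 m2 : ℤ)
    (hL : ∀ p : ℤ × ℤ × ℤ, p ∈ L ↔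
      (m1 ∣ c1 * p.1 + c2 * p.2.1 + c3 * p.2.2 ∧ m2 ∣ d1 * p.1 + d2 * p.2.1 + d3 * p.2.2)) :
    L.index * (AddSubgroup.closure {((c1, d1) : ℤ × ℤ), (c2, d2), (c3, d3), (m1, 0), (0, m2)}).index
      = (m1 * m2).natAbs := by
  classical
  set M1 := m1.natAbs with hM1
  set M2 := m2.natAbs with hM2
  set φ : (ℤ × ℤ × ℤ) →+ ZMod M1 × ZMod M2 := AddMonoidHom.mk'
    (fun p => (((c1 * p.1 + c2 * p.2.1 + c3 * p.2.2 : ℤ) : ZMod M1),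
               ((d1 * p.1 + d2 * p.2.1 + d3 * p.2.2 : ℤ) : ZMod M2)))
    (by
      intro p q
      simp only [Prod.fst_add, Prod.snd_add, Prod.mk_add_mk, Prod.mk.injEq]
      constructor <;> · push_cast; ring) with hφ
  have hker : φ.ker = L := by
    ext p
    rw [AddMonoidHom.mem_ker, hL]
    simp only [hφ, AddMonoidHom.mk'_apply, Prod.mk_eq_zero]
    rw [ZMod.intCast_zmod_eq_zero_iff_dvd, ZMod.intCast_zmod_eq_zero_iff_dvd,
      hM1, hM2, Int.natAbs_dvd, Int.natAbs_dvd]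
  set π : (ℤ × ℤ) →+ ZMod M1 × ZMod M2 :=
    (Int.castAddHom (ZMod M1)).prodMap (Int.castAddHom (ZMod M2)) with hπ
  have hπs : Function.Surjective π := by
    intro x
    obtain ⟨u, hu⟩ := ZMod.intCast_surjective x.1
    obtain ⟨v, hv⟩ := ZMod.intCast_surjective x.2
    exact ⟨(u, v), by simp [hπ, Prod.ext_iff, hu, hv]⟩
  have hcomap : φ.range.comap π = AddSubgroup.closure {((c1, d1) : ℤ × ℤ), (c2, d2), (c3, d3), (m1, 0), (0, m2)} := by
    apply le_antisymm
    · intro x hx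
      obtain ⟨p, hp⟩ := hx
      have h1 : (((c1 * p.1 + c2 * p.2.1 + c3 * p.2.2 : ℤ) : ZMod M1)) = ((x.1 : ℤ) : ZMod M1) := by
        have := congrArg Prod.fst hp; simpa [hφ, hπ] using this
      have h2 : (((d1 * p.1 + d2 * p.2.1 + d3 * p.2.2 : ℤ) : ZMod M2)) = ((x.2 : ℤ) : ZMod M2) := by
        have := congrArg Prod.snd hp; simpa [hφ, hπ] using this
      have hd1 : m1 ∣ x.1 - (c1 * p.1 + c2 * p.2.1 + c3 * p.2.2) := by
        rw [← Int.natAbs_dvd, ← hM1]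
        exact ((ZMod.intCast_eq_intCast_iff _ _ _).mp h1).dvd
      have hd2 : m2 ∣ x.2 - (d1 * p.1 + d2 * p.2.1 + d3 * p.2.2) := by
        rw [← Int.natAbs_dvd, ← hM2]
        exact ((ZMod.intCast_eq_intCast_iff _ _ _).mp h2).dvd
      obtain ⟨k, hk⟩ := hd1
      obtain ⟨l, hl⟩ := hd2
      have hxeq : x = p.1 • ((c1, d1) : ℤ × ℤ) + p.2.1 • ((c2, d2) : ℤ × ℤ)
          + p.2.2 • ((c3, d3) : ℤ × ℤ) + k • ((m1, 0) : ℤ × ℤ) + l • ((0, m2) : ℤ × ℤ) := by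
        have hx1 : x.1 = c1 * p.1 + c2 * p.2.1 + c3 * p.2.2 + m1 * k := by linarith
        have hx2 : x.2 = d1 * p.1 + d2 * p.2.1 + d3 * p.2.2 + m2 * l := by linarith
        ext
        · simp only [Prod.fst_add, Prod.smul_fst, smul_eq_mul, hx1]; ring
        · simp only [Prod.snd_add, Prod.smul_snd, smul_eq_mul, hx2]; ring
      rw [hxeq]
      have m5 : ∀ y ∈ ({((c1, d1) : ℤ × ℤ), (c2, d2), (c3, d3), (m1, 0), (0, m2)} : Set (ℤ × ℤ)),
          y ∈ AddSubgroup.closure {((c1, d1) : ℤ × ℤ), (c2, d2), (c3, d3), (m1, 0), (0, m2)} :=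
        fun y hy => subset_closure hy
      refine add_mem (add_mem (add_mem (add_mem ?_ ?_) ?_) ?_) ?_ <;>
        exact zsmul_mem (m5 _ (by simp)) _
    · rw [AddSubgroup.closure_le]
      rintro x (rfl | rfl | rfl | rfl | rfl)
      · exact ⟨(1, 0, 0), by simp [hφ, hπ, Prod.ext_iff]⟩
      · exact ⟨(0, 1, 0), by simp [hφ, hπ, Prod.ext_iff]⟩
      · exact ⟨(0, 0, 1), by simp [hφ, hπ, Prod.ext_iff]⟩
      · refine ⟨0, ?_⟩
        have : ((m1 : ℤ) : ZMod M1) = 0 := by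
          rw [ZMod.intCast_zmod_eq_zero_iff_dvd, hM1, Int.natAbs_dvd]
        simp [hφ, hπ, Prod.ext_iff, this]
      · refine ⟨0, ?_⟩
        have : ((m2 : ℤ) : ZMod M2) = 0 := by
          rw [ZMod.intCast_zmod_eq_zero_iff_dvd, hM2, Int.natAbs_dvd]
        simp [hφ, hπ, Prod.ext_iff, this]
  have e1 : L.index = Nat.card φ.range := by rw [← hker]; exact AddSubgroup.index_ker φ
  have e2 : (AddSubgroup.closure {((c1, d1) : ℤ × ℤ), (c2, d2), (c3, d3), (m1, 0), (0, m2)}).index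
      = φ.range.index := by rw [← hcomap]; exact AddSubgroup.index_comap_of_surjective _ hπs
  rw [e1, e2, AddSubgroup.card_mul_index, Nat.card_prod, Nat.card_zmod, Nat.card_zmod,
    hM1, hM2, Int.natAbs_mul]

private lemma no_prime_common (e1 e2 e3 : ℤ) (hne : e1 ≠ 0 ∨ e2 ≠ 0 ∨ e3 ≠ 0)
    (hp : ∀ p : ℕ, p.Prime → (p:ℤ) ∣ e1 → (p:ℤ) ∣ e2 → (p:ℤ) ∣ e3 → False) :
    ∀ u : ℕ, (u:ℤ) ∣ e1 → (u:ℤ) ∣ e2 → (u:ℤ) ∣ e3 → u = 1 := by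
  intro u h1 h2 h3
  rcases Nat.eq_zero_or_pos u with rfl | hu
  · exfalso
    simp only [Nat.cast_zero, zero_dvd_iff] at h1 h2 h3
    rcases hne with h | h | h <;> [exact h h1; exact h h2; exact h h3]
  · by_contra hne1
    have hmf := Nat.minFac_prime hne1
    have hdvd : (u.minFac : ℤ) ∣ (u : ℤ) := Int.natCast_dvd_natCast.mpr (Nat.minFac_dvd u)
    exact hp u.minFac hmf (hdvd.trans h1) (hdvd.trans h2) (hdvd.trans h3)

private lemma gcd3_eq_one (e1 e2 e3 : ℤ)
    (h : ∀ u : ℕ, (u:ℤ) ∣ e1 → (u:ℤ) ∣ e2 → (u:ℤ) ∣ e3 → u = 1) :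
    Nat.gcd e1.natAbs (Nat.gcd e2.natAbs e3.natAbs) = 1 := by
  set g := Nat.gcd e1.natAbs (Nat.gcd e2.natAbs e3.natAbs) with hg
  have hcast : ∀ e : ℤ, g ∣ e.natAbs → (g:ℤ) ∣ e := fun e he =>
    Int.natAbs_dvd_natAbs.mp (by simpa using he)
  exact h g (hcast _ (Nat.gcd_dvd_left _ _))
    (hcast _ ((Nat.gcd_dvd_right _ _).trans (Nat.gcd_dvd_left _ _)))
    (hcast _ ((Nat.gcd_dvd_right _ _).trans (Nat.gcd_dvd_right _ _)))

private lemma dvd_of_dvd_three (u m' E1 E2 E3 : ℕ)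
    (h1 : u ∣ m' * E1) (h2 : u ∣ m' * E2) (h3 : u ∣ m' * E3)
    (hE : Nat.gcd E1 (Nat.gcd E2 E3) = 1) : u ∣ m' := by
  have h := Nat.dvd_gcd h1 (Nat.dvd_gcd h2 h3)
  rwa [Nat.gcd_mul_left, Nat.gcd_mul_left, hE, mul_one] at h

private lemma prime_dvd_of_dvd_8cube {p : ℕ} (hp : p.Prime) (hp2 : p ≠ 2) {x : ℤ}
    (h : (p:ℤ) ∣ 8 * x^3) : (p:ℤ) ∣ x := by
  have hpI : Prime (p:ℤ) := Nat.prime_iff_prime_int.mp hp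
  rcases hpI.dvd_mul.mp h with h8 | hx
  · exfalso
    have h8' : p ∣ 8 := by exact_mod_cast h8
    have : p ∣ 2 := hp.dvd_of_dvd_pow (n := 3) (by norm_num at h8' ⊢; exact h8')
    exact hp2 ((Nat.prime_dvd_prime_iff_eq hp Nat.prime_two).mp this)
  · exact hpI.dvd_of_dvd_pow hx

private lemma odd_case_one (a b c : ℤ) (hb : Odd b)
    (hprim : Int.gcd (Int.gcd a b) c = 1) :
    ∀ u : ℕ, (u:ℤ) ∣ 8*a^3 → (u:ℤ) ∣ 8*c^3 → (u:ℤ) ∣ b*(b^2+4*a*c) → u = 1 := by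
  have hodd : Odd (b*(b^2+4*a*c)) := by
    refine hb.mul ?_
    have h1 : Odd (b^2) := hb.pow
    have h2 : Even (4*a*c) := ⟨2*a*c, by ring⟩
    exact h1.add_even h2
  apply no_prime_common
  · refine Or.inr (Or.inr ?_)
    intro h0
    rw [h0] at hodd
    simpa using hodd
  · intro p hp hd1 hd2 hd3
    by_cases hp2 : p = 2
    · subst hp2
      exact Int.not_even_iff_odd.mpr hodd (even_iff_two_dvd.mpr (by exact_mod_cast hd3))
    · have hpI : Prime (p:ℤ) := Nat.prime_iff_prime_int.mp hp
      have hpa : (p:ℤ) ∣ a := prime_dvd_of_dvd_8cube hp hp2 hd1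
      have hpc : (p:ℤ) ∣ c := prime_dvd_of_dvd_8cube hp hp2 hd2
      have hpb : (p:ℤ) ∣ b := by
        rcases hpI.dvd_mul.mp hd3 with h | h
        · exact h
        · have h4 : (p:ℤ) ∣ 4*a*c := (hpa.mul_left 4).mul_right c
          have hb2 : (p:ℤ) ∣ b^2 := by
            have := dvd_sub h h4
            rwa [show (b^2+4*a*c) - 4*a*c = b^2 from by ring] at this
          exact hpI.dvd_of_dvd_pow hb2
      have h1 : (p:ℤ) ∣ ((1:ℕ):ℤ) := by
        rw [← hprim]
        exact Int.dvd_coe_gcd (Int.dvd_coe_gcd hpa hpb) hpc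
      have : p ∣ 1 := by exact_mod_cast h1
      exact Nat.Prime.one_lt hp |>.ne' (Nat.dvd_one.mp this) |>.elim

private lemma even_case_one (a B c : ℤ)
    (hprim : Int.gcd (Int.gcd a (2*B)) c = 1) :
    ∀ u : ℕ, (u:ℤ) ∣ a^3 → (u:ℤ) ∣ c^3 → (u:ℤ) ∣ B*(B^2+a*c) → u = 1 := by
  apply no_prime_common
  · by_cases ha : a = 0
    · refine Or.inr (Or.inl ?_)
      intro hc
      have hc0 : c = 0 := pow_eq_zero_iff (n := 3) (by norm_num) |>.mp hc
      rw [ha, hc0] at hprim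
      simp only [Int.gcd_zero_right, Int.gcd_zero_left, Int.natAbs_natCast,
        Int.natAbs_mul] at hprim
      simp only [show (2:ℤ).natAbs = 2 from rfl] at hprim
      omega
    · exact Or.inl (pow_ne_zero 3 ha)
  · intro p hp hd1 hd2 hd3
    have hpI : Prime (p:ℤ) := Nat.prime_iff_prime_int.mp hp
    have hpa : (p:ℤ) ∣ a := hpI.dvd_of_dvd_pow hd1
    have hpc : (p:ℤ) ∣ c := hpI.dvd_of_dvd_pow hd2
    have hpB : (p:ℤ) ∣ B := by
      rcases hpI.dvd_mul.mp hd3 with h | h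
      · exact h
      · have hac : (p:ℤ) ∣ a*c := hpa.mul_right c
        have hB2 : (p:ℤ) ∣ B^2 := by
          have := dvd_sub h hac
          rwa [show (B^2+a*c) - a*c = B^2 from by ring] at this
        exact hpI.dvd_of_dvd_pow hB2
    have h1 : (p:ℤ) ∣ ((1:ℕ):ℤ) := by
      rw [← hprim]
      exact Int.dvd_coe_gcd (Int.dvd_coe_gcd hpa (hpB.mul_left 2)) hpc
    have : p ∣ 1 := by exact_mod_cast h1
    exact Nat.Prime.one_lt hp |>.ne' (Nat.dvd_one.mp this) |>.elim

private lemma closure_index_lat1_odd (a c : ℤ) (b : ℤ) (ha : a ≠ 0) (hb : Odd b)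
    (hprim : Int.gcd (Int.gcd a b) c = 1) :
    (AddSubgroup.closure ({((4*b*c, 4*c*(b^2+2*a*c)) : ℤ × ℤ), (-(b^2+2*a*c), -(b*(b^2+4*a*c))), (2*a*b, 2*a*b^2), (2*a^2, 0), (0, 8*a^3)} : Set (ℤ × ℤ))).index = (2*a^2).natAbs := by
  apply index_closure_eq
  · refine ⟨(2*a^2, 0), by simp, (0, 8*a^3), by simp, ?_⟩
    simp only [dz]
    rw [show (2*a^2)*(8*a^3) - 0*(0:ℤ) = 16*a^5 from by ring]
    exact mul_ne_zero (by norm_num) (pow_ne_zero 5 ha)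
  · intro x hx y hy
    rw [Int.natAbs_dvd]
    simp only [Set.mem_insert_iff, Set.mem_singleton_iff] at hx hy
    rcases hx with rfl|rfl|rfl|rfl|rfl <;> rcases hy with rfl|rfl|rfl|rfl|rfl <;>
      simp only [dz] <;>
      [exact ⟨0, by ring⟩;
       exact ⟨8*c^3, by ring⟩;
       exact ⟨-(8*b*c^2), by ring⟩;
       exact ⟨-(4*c*(b^2+2*a*c)), by ring⟩;
       exact ⟨16*a*b*c, by ring⟩;
       exact ⟨-(8*c^3), by ring⟩;
       exact ⟨0, by ring⟩;
       exact ⟨2*b^2*c, by ring⟩;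
       exact ⟨b*(b^2+4*a*c), by ring⟩;
       exact ⟨-(4*a*(b^2+2*a*c)), by ring⟩;
       exact ⟨-(-(8*b*c^2)), by ring⟩;
       exact ⟨-(2*b^2*c), by ring⟩;
       exact ⟨0, by ring⟩;
       exact ⟨-(2*a*b^2), by ring⟩;
       exact ⟨8*a^2*b, by ring⟩;
       exact ⟨-(-(4*c*(b^2+2*a*c))), by ring⟩;
       exact ⟨-(b*(b^2+4*a*c)), by ring⟩;
       exact ⟨-(-(2*a*b^2)), by ring⟩;
       exact ⟨0, by ring⟩;
       exact ⟨8*a^3, by ring⟩;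
       exact ⟨-(16*a*b*c), by ring⟩;
       exact ⟨-(-(4*a*(b^2+2*a*c))), by ring⟩;
       exact ⟨-(8*a^2*b), by ring⟩;
       exact ⟨-(8*a^3), by ring⟩;
       exact ⟨0, by ring⟩]
  · intro u hu
    have h1 := hu (((2*a^2 : ℤ), (0:ℤ))) (by simp) (((0:ℤ), 8*a^3)) (by simp)
    rw [show dz (((2*a^2 : ℤ), (0:ℤ))) (((0:ℤ), 8*a^3)) = (2*a^2) * (8*a^3) from by simp only [dz]; ring] at h1
    have h2 := hu (((4*b*c : ℤ), 4*c*(b^2+2*a*c))) (by simp) (((-(b^2+2*a*c) : ℤ), -(b*(b^2+4*a*c)))) (by simp)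
    rw [show dz (((4*b*c : ℤ), 4*c*(b^2+2*a*c))) (((-(b^2+2*a*c) : ℤ), -(b*(b^2+4*a*c)))) = (2*a^2) * (8*c^3) from by simp only [dz]; ring] at h2
    have h3 := hu (((-(b^2+2*a*c) : ℤ), -(b*(b^2+4*a*c)))) (by simp) (((2*a^2 : ℤ), (0:ℤ))) (by simp)
    rw [show dz (((-(b^2+2*a*c) : ℤ), -(b*(b^2+4*a*c)))) (((2*a^2 : ℤ), (0:ℤ))) = (2*a^2) * (b*(b^2+4*a*c)) from by simp only [dz]; ring] at h3
    refine dvd_of_dvd_three u (2*a^2).natAbs (8*a^3).natAbs (8*c^3).natAbs (b*(b^2+4*a*c)).natAbs ?_ ?_ ?_ ?_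
    · rw [← Int.natAbs_mul]; simpa using Int.natAbs_dvd_natAbs.mpr h1
    · rw [← Int.natAbs_mul]; simpa using Int.natAbs_dvd_natAbs.mpr h2
    · rw [← Int.natAbs_mul]; simpa using Int.natAbs_dvd_natAbs.mpr h3
    · exact gcd3_eq_one _ _ _ (odd_case_one a b c hb hprim)

private lemma closure_index_lat1_even (a c : ℤ) (B : ℤ) (ha : a ≠ 0)
    (hprim : Int.gcd (Int.gcd a (2*B)) c = 1) :
    (AddSubgroup.closure ({((4*(2*B)*c, 4*c*((2*B)^2+2*a*c)) : ℤ × ℤ), (-((2*B)^2+2*a*c), -((2*B)*((2*B)^2+4*a*c))), (2*a*(2*B), 2*a*(2*B)^2), (2*a^2, 0), (0, 8*a^3)} : Set (ℤ × ℤ))).index = (16*a^2).natAbs := by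
  apply index_closure_eq
  · refine ⟨(2*a^2, 0), by simp, (0, 8*a^3), by simp, ?_⟩
    simp only [dz]
    rw [show (2*a^2)*(8*a^3) - 0*(0:ℤ) = 16*a^5 from by ring]
    exact mul_ne_zero (by norm_num) (pow_ne_zero 5 ha)
  · intro x hx y hy
    rw [Int.natAbs_dvd]
    simp only [Set.mem_insert_iff, Set.mem_singleton_iff] at hx hy
    rcases hx with rfl|rfl|rfl|rfl|rfl <;> rcases hy with rfl|rfl|rfl|rfl|rfl <;>
      simp only [dz] <;>
      [exact ⟨0, by ring⟩;
       exact ⟨c^3, by ring⟩;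
       exact ⟨-(2*B*c^2), by ring⟩;
       exact ⟨-(c*(2*B^2+a*c)), by ring⟩;
       exact ⟨4*a*B*c, by ring⟩;
       exact ⟨-(c^3), by ring⟩;
       exact ⟨0, by ring⟩;
       exact ⟨B^2*c, by ring⟩;
       exact ⟨B*(B^2+a*c), by ring⟩;
       exact ⟨-(a*(2*B^2+a*c)), by ring⟩;
       exact ⟨-(-(2*B*c^2)), by ring⟩;
       exact ⟨-(B^2*c), by ring⟩;
       exact ⟨0, by ring⟩;
       exact ⟨-(a*B^2), by ring⟩;
       exact ⟨2*a^2*B, by ring⟩;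
       exact ⟨-(-(c*(2*B^2+a*c))), by ring⟩;
       exact ⟨-(B*(B^2+a*c)), by ring⟩;
       exact ⟨-(-(a*B^2)), by ring⟩;
       exact ⟨0, by ring⟩;
       exact ⟨a^3, by ring⟩;
       exact ⟨-(4*a*B*c), by ring⟩;
       exact ⟨-(-(a*(2*B^2+a*c))), by ring⟩;
       exact ⟨-(2*a^2*B), by ring⟩;
       exact ⟨-(a^3), by ring⟩;
       exact ⟨0, by ring⟩]
  · intro u hu
    have h1 := hu (((2*a^2 : ℤ), (0:ℤ))) (by simp) (((0:ℤ), 8*a^3)) (by simp)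
    rw [show dz (((2*a^2 : ℤ), (0:ℤ))) (((0:ℤ), 8*a^3)) = (16*a^2) * (a^3) from by simp only [dz]; ring] at h1
    have h2 := hu (((4*(2*B)*c : ℤ), 4*c*((2*B)^2+2*a*c))) (by simp) (((-((2*B)^2+2*a*c) : ℤ), -((2*B)*((2*B)^2+4*a*c)))) (by simp)
    rw [show dz (((4*(2*B)*c : ℤ), 4*c*((2*B)^2+2*a*c))) (((-((2*B)^2+2*a*c) : ℤ), -((2*B)*((2*B)^2+4*a*c)))) = (16*a^2) * (c^3) from by simp only [dz]; ring] at h2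
    have h3 := hu (((-((2*B)^2+2*a*c) : ℤ), -((2*B)*((2*B)^2+4*a*c)))) (by simp) (((2*a^2 : ℤ), (0:ℤ))) (by simp)
    rw [show dz (((-((2*B)^2+2*a*c) : ℤ), -((2*B)*((2*B)^2+4*a*c)))) (((2*a^2 : ℤ), (0:ℤ))) = (16*a^2) * (B*(B^2+a*c)) from by simp only [dz]; ring] at h3
    refine dvd_of_dvd_three u (16*a^2).natAbs (a^3).natAbs (c^3).natAbs (B*(B^2+a*c)).natAbs ?_ ?_ ?_ ?_
    · rw [← Int.natAbs_mul]; simpa using Int.natAbs_dvd_natAbs.mpr h1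
    · rw [← Int.natAbs_mul]; simpa using Int.natAbs_dvd_natAbs.mpr h2
    · rw [← Int.natAbs_mul]; simpa using Int.natAbs_dvd_natAbs.mpr h3
    · exact gcd3_eq_one _ _ _ (even_case_one a B c hprim)

private lemma closure_index_lat2_odd (a c : ℤ) (b : ℤ) (hb : Odd b) (hn : b*(b^2+4*a*c) ≠ 0)
    (hprim : Int.gcd (Int.gcd a b) c = 1) :
    (AddSubgroup.closure ({((c*(4*b^2+8*a*c), 8*c^3) : ℤ × ℤ), (2*a*b^2, -(2*b^2*c)), (-(8*a^3), -(a*(4*b^2+8*a*c))), (b*(b^2+4*a*c), 0), (0, b*(b^2+4*a*c))} : Set (ℤ × ℤ))).index = (b*(b^2+4*a*c)).natAbs := by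
  apply index_closure_eq
  · refine ⟨(b*(b^2+4*a*c), 0), by simp, (0, b*(b^2+4*a*c)), by simp, ?_⟩
    simp only [dz]
    rw [show (b*(b^2+4*a*c))*(b*(b^2+4*a*c)) - 0*(0:ℤ) = (b*(b^2+4*a*c))^2 from by ring]
    exact pow_ne_zero 2 hn
  · intro x hx y hy
    rw [Int.natAbs_dvd]
    simp only [Set.mem_insert_iff, Set.mem_singleton_iff] at hx hy
    rcases hx with rfl|rfl|rfl|rfl|rfl <;> rcases hy with rfl|rfl|rfl|rfl|rfl <;>
      simp only [dz] <;>
      [exact ⟨0, by ring⟩;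
       exact ⟨-(8*b*c^2), by ring⟩;
       exact ⟨-(16*a*b*c), by ring⟩;
       exact ⟨-(8*c^3), by ring⟩;
       exact ⟨c*(4*b^2+8*a*c), by ring⟩;
       exact ⟨-(-(8*b*c^2)), by ring⟩;
       exact ⟨0, by ring⟩;
       exact ⟨-(8*a^2*b), by ring⟩;
       exact ⟨2*b^2*c, by ring⟩;
       exact ⟨2*a*b^2, by ring⟩;
       exact ⟨-(-(16*a*b*c)), by ring⟩;
       exact ⟨-(-(8*a^2*b)), by ring⟩;
       exact ⟨0, by ring⟩;
       exact ⟨a*(4*b^2+8*a*c), by ring⟩;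
       exact ⟨-(8*a^3), by ring⟩;
       exact ⟨-(-(8*c^3)), by ring⟩;
       exact ⟨-(2*b^2*c), by ring⟩;
       exact ⟨-(a*(4*b^2+8*a*c)), by ring⟩;
       exact ⟨0, by ring⟩;
       exact ⟨b*(b^2+4*a*c), by ring⟩;
       exact ⟨-(c*(4*b^2+8*a*c)), by ring⟩;
       exact ⟨-(2*a*b^2), by ring⟩;
       exact ⟨-(-(8*a^3)), by ring⟩;
       exact ⟨-(b*(b^2+4*a*c)), by ring⟩;
       exact ⟨0, by ring⟩]
  · intro u hu
    have h1 := hu (((0:ℤ), b*(b^2+4*a*c))) (by simp) (((-(8*a^3) : ℤ), -(a*(4*b^2+8*a*c)))) (by simp)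
    rw [show dz (((0:ℤ), b*(b^2+4*a*c))) (((-(8*a^3) : ℤ), -(a*(4*b^2+8*a*c)))) = (b*(b^2+4*a*c)) * (8*a^3) from by simp only [dz]; ring] at h1
    have h2 := hu (((b*(b^2+4*a*c) : ℤ), (0:ℤ))) (by simp) (((c*(4*b^2+8*a*c) : ℤ), 8*c^3)) (by simp)
    rw [show dz (((b*(b^2+4*a*c) : ℤ), (0:ℤ))) (((c*(4*b^2+8*a*c) : ℤ), 8*c^3)) = (b*(b^2+4*a*c)) * (8*c^3) from by simp only [dz]; ring] at h2
    have h3 := hu (((b*(b^2+4*a*c) : ℤ), (0:ℤ))) (by simp) (((0:ℤ), b*(b^2+4*a*c))) (by simp)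
    rw [show dz (((b*(b^2+4*a*c) : ℤ), (0:ℤ))) (((0:ℤ), b*(b^2+4*a*c))) = (b*(b^2+4*a*c)) * (b*(b^2+4*a*c)) from by simp only [dz]; ring] at h3
    refine dvd_of_dvd_three u (b*(b^2+4*a*c)).natAbs (8*a^3).natAbs (8*c^3).natAbs (b*(b^2+4*a*c)).natAbs ?_ ?_ ?_ ?_
    · rw [← Int.natAbs_mul]; simpa using Int.natAbs_dvd_natAbs.mpr h1
    · rw [← Int.natAbs_mul]; simpa using Int.natAbs_dvd_natAbs.mpr h2
    · rw [← Int.natAbs_mul]; simpa using Int.natAbs_dvd_natAbs.mpr h3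
    · exact gcd3_eq_one _ _ _ (odd_case_one a b c hb hprim)

private lemma closure_index_lat2_even (a c : ℤ) (B : ℤ) (hn : (2*B)*((2*B)^2+4*a*c) ≠ 0)
    (hprim : Int.gcd (Int.gcd a (2*B)) c = 1) :
    (AddSubgroup.closure ({((c*(4*(2*B)^2+8*a*c), 8*c^3) : ℤ × ℤ), (2*a*(2*B)^2, -(2*(2*B)^2*c)), (-(8*a^3), -(a*(4*(2*B)^2+8*a*c))), ((2*B)*((2*B)^2+4*a*c), 0), (0, (2*B)*((2*B)^2+4*a*c))} : Set (ℤ × ℤ))).index = (8*((2*B)*((2*B)^2+4*a*c))).natAbs := by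
  apply index_closure_eq
  · refine ⟨((2*B)*((2*B)^2+4*a*c), 0), by simp, (0, (2*B)*((2*B)^2+4*a*c)), by simp, ?_⟩
    simp only [dz]
    rw [show ((2*B)*((2*B)^2+4*a*c))*((2*B)*((2*B)^2+4*a*c)) - 0*(0:ℤ) = ((2*B)*((2*B)^2+4*a*c))^2 from by ring]
    exact pow_ne_zero 2 hn
  · intro x hx y hy
    rw [Int.natAbs_dvd]
    simp only [Set.mem_insert_iff, Set.mem_singleton_iff] at hx hy
    rcases hx with rfl|rfl|rfl|rfl|rfl <;> rcases hy with rfl|rfl|rfl|rfl|rfl <;>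
      simp only [dz] <;>
      [exact ⟨0, by ring⟩;
       exact ⟨-(2*B*c^2), by ring⟩;
       exact ⟨-(4*a*B*c), by ring⟩;
       exact ⟨-(c^3), by ring⟩;
       exact ⟨c*(2*B^2+a*c), by ring⟩;
       exact ⟨-(-(2*B*c^2)), by ring⟩;
       exact ⟨0, by ring⟩;
       exact ⟨-(2*a^2*B), by ring⟩;
       exact ⟨B^2*c, by ring⟩;
       exact ⟨a*B^2, by ring⟩;
       exact ⟨-(-(4*a*B*c)), by ring⟩;
       exact ⟨-(-(2*a^2*B)), by ring⟩;
       exact ⟨0, by ring⟩;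
       exact ⟨a*(2*B^2+a*c), by ring⟩;
       exact ⟨-(a^3), by ring⟩;
       exact ⟨-(-(c^3)), by ring⟩;
       exact ⟨-(B^2*c), by ring⟩;
       exact ⟨-(a*(2*B^2+a*c)), by ring⟩;
       exact ⟨0, by ring⟩;
       exact ⟨B*(B^2+a*c), by ring⟩;
       exact ⟨-(c*(2*B^2+a*c)), by ring⟩;
       exact ⟨-(a*B^2), by ring⟩;
       exact ⟨-(-(a^3)), by ring⟩;
       exact ⟨-(B*(B^2+a*c)), by ring⟩;
       exact ⟨0, by ring⟩]
  · intro u hu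
    have h1 := hu (((0:ℤ), (2*B)*((2*B)^2+4*a*c))) (by simp) (((-(8*a^3) : ℤ), -(a*(4*(2*B)^2+8*a*c)))) (by simp)
    rw [show dz (((0:ℤ), (2*B)*((2*B)^2+4*a*c))) (((-(8*a^3) : ℤ), -(a*(4*(2*B)^2+8*a*c)))) = (8*((2*B)*((2*B)^2+4*a*c))) * (a^3) from by simp only [dz]; ring] at h1
    have h2 := hu ((((2*B)*((2*B)^2+4*a*c) : ℤ), (0:ℤ))) (by simp) (((c*(4*(2*B)^2+8*a*c) : ℤ), 8*c^3)) (by simp)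
    rw [show dz ((((2*B)*((2*B)^2+4*a*c) : ℤ), (0:ℤ))) (((c*(4*(2*B)^2+8*a*c) : ℤ), 8*c^3)) = (8*((2*B)*((2*B)^2+4*a*c))) * (c^3) from by simp only [dz]; ring] at h2
    have h3 := hu ((((2*B)*((2*B)^2+4*a*c) : ℤ), (0:ℤ))) (by simp) (((0:ℤ), (2*B)*((2*B)^2+4*a*c))) (by simp)
    rw [show dz ((((2*B)*((2*B)^2+4*a*c) : ℤ), (0:ℤ))) (((0:ℤ), (2*B)*((2*B)^2+4*a*c))) = (8*((2*B)*((2*B)^2+4*a*c))) * (B*(B^2+a*c)) from by simp only [dz]; ring] at h3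
    refine dvd_of_dvd_three u (8*((2*B)*((2*B)^2+4*a*c))).natAbs (a^3).natAbs (c^3).natAbs (B*(B^2+a*c)).natAbs ?_ ?_ ?_ ?_
    · rw [← Int.natAbs_mul]; simpa using Int.natAbs_dvd_natAbs.mpr h1
    · rw [← Int.natAbs_mul]; simpa using Int.natAbs_dvd_natAbs.mpr h2
    · rw [← Int.natAbs_mul]; simpa using Int.natAbs_dvd_natAbs.mpr h3
    · exact gcd3_eq_one _ _ _ (even_case_one a B c hprim)

private lemma parity_bridge (a b c : ℤ) : Odd (b^2 - 4*a*c) ↔ Odd b := by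
  rcases Int.even_or_odd b with he | ho
  · obtain ⟨B, hB⟩ := he
    constructor
    · intro h
      exact absurd (⟨2*B^2 - 2*a*c, by rw [hB]; ring⟩ : Even (b^2-4*a*c))
        (Int.not_even_iff_odd.mpr h)
    · intro h
      exact absurd (⟨B, hB⟩ : Even b) (Int.not_even_iff_odd.mpr h)
  · obtain ⟨k, hk⟩ := ho
    exact ⟨fun _ => ⟨k, hk⟩, fun _ => ⟨2*k^2+2*k-2*a*c, by rw [hk]; ring⟩⟩

open scoped Classical in
theorem lattice_indices (a b c : ℤ) (hprim : Int.gcd (Int.gcd a b) c = 1)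
    (hdisc : b^2 - 4*a*c ≠ 0)
    (s : ℕ) (hs : s = if Odd (b^2 - 4*a*c) then 8 else 1) :
    (a ≠ 0 → (lat1 a b c).index = s * a.natAbs^3) ∧
    (b ≠ 0 → b^2 + 4*a*c ≠ 0 → 8 * (lat2 a b c).index = s * (b*(b^2 + 4*a*c)).natAbs) := by
  constructor
  · intro ha
    have hL : ∀ p : ℤ × ℤ × ℤ, p ∈ lat1 a b c ↔
        (2*a^2 ∣ 4*b*c*p.1 + (-(b^2+2*a*c))*p.2.1 + (2*a*b)*p.2.2 ∧
         8*a^3 ∣ (4*c*(b^2+2*a*c))*p.1 + (-(b*(b^2+4*a*c)))*p.2.1 + (2*a*b^2)*p.2.2) := by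
      intro p
      have e1 : 4*b*c*p.1 + (-(b^2+2*a*c))*p.2.1 + (2*a*b)*p.2.2
          = 4*b*c*p.1 - (b^2 + 2*a*c)*p.2.1 + 2*a*b*p.2.2 := by ring
      have e2 : (4*c*(b^2+2*a*c))*p.1 + (-(b*(b^2+4*a*c)))*p.2.1 + (2*a*b^2)*p.2.2
          = 4*c*(b^2 + 2*a*c)*p.1 - b*(b^2 + 4*a*c)*p.2.1 + 2*a*b^2*p.2.2 := by ring
      rw [e1, e2]
      exact Iff.rfl
    have key := index_mul_index (lat1 a b c) (4*b*c) (-(b^2+2*a*c)) (2*a*b)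
        (4*c*(b^2+2*a*c)) (-(b*(b^2+4*a*c))) (2*a*b^2) (2*a^2) (8*a^3) hL
    by_cases hΔ : Odd (b^2 - 4*a*c)
    · have hb : Odd b := (parity_bridge a b c).mp hΔ
      rw [hs, if_pos hΔ]
      rw [closure_index_lat1_odd a c b ha hb hprim] at key
      have ht : 0 < (2*a^2).natAbs :=
        Int.natAbs_pos.mpr (mul_ne_zero two_ne_zero (pow_ne_zero 2 ha))
      apply Nat.eq_of_mul_eq_mul_right ht
      rw [key, show (2*a^2) * (8*a^3) = (16:ℤ)*a^5 from by ring]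
      simp only [Int.natAbs_mul, Int.natAbs_pow]
      norm_num
      ring
    · have hb : Even b := Int.not_odd_iff_even.mp (fun h => hΔ ((parity_bridge a b c).mpr h))
      obtain ⟨B, hB⟩ := hb
      have hB' : b = 2*B := by omega
      rw [hs, if_neg hΔ]
      subst hB'
      rw [closure_index_lat1_even a c B ha hprim] at key
      have ht : 0 < (16*a^2).natAbs :=
        Int.natAbs_pos.mpr (mul_ne_zero (by norm_num) (pow_ne_zero 2 ha))
      apply Nat.eq_of_mul_eq_mul_right ht
      rw [key, show (2*a^2) * (8*a^3) = (16:ℤ)*a^5 from by ring]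
      simp only [Int.natAbs_mul, Int.natAbs_pow]
      norm_num
      ring
  · intro hb0 hn2
    have hn : b*(b^2+4*a*c) ≠ 0 := mul_ne_zero hb0 hn2
    have hL : ∀ p : ℤ × ℤ × ℤ, p ∈ lat2 a b c ↔
        (b*(b^2+4*a*c) ∣ (c*(4*b^2+8*a*c))*p.1 + (2*a*b^2)*p.2.1 + (-(8*a^3))*p.2.2 ∧
         b*(b^2+4*a*c) ∣ (8*c^3)*p.1 + (-(2*b^2*c))*p.2.1 + (-(a*(4*b^2+8*a*c)))*p.2.2) := by
      intro p
      have e1 : (c*(4*b^2+8*a*c))*p.1 + (2*a*b^2)*p.2.1 + (-(8*a^3))*p.2.2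
          = c*(4*b^2 + 8*a*c)*p.1 + 2*a*b^2*p.2.1 - 8*a^3*p.2.2 := by ring
      have e2 : (8*c^3)*p.1 + (-(2*b^2*c))*p.2.1 + (-(a*(4*b^2+8*a*c)))*p.2.2
          = 8*c^3*p.1 - 2*b^2*c*p.2.1 - a*(4*b^2 + 8*a*c)*p.2.2 := by ring
      rw [e1, e2]
      exact Iff.rfl
    have key := index_mul_index (lat2 a b c) (c*(4*b^2+8*a*c)) (2*a*b^2) (-(8*a^3))
        (8*c^3) (-(2*b^2*c)) (-(a*(4*b^2+8*a*c))) (b*(b^2+4*a*c)) (b*(b^2+4*a*c)) hL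
    by_cases hΔ : Odd (b^2 - 4*a*c)
    · have hb : Odd b := (parity_bridge a b c).mp hΔ
      rw [hs, if_pos hΔ]
      rw [closure_index_lat2_odd a c b hb hn hprim] at key
      have ht : 0 < (b*(b^2+4*a*c)).natAbs := Int.natAbs_pos.mpr hn
      apply Nat.eq_of_mul_eq_mul_right ht
      rw [mul_assoc, key]
      simp only [Int.natAbs_mul]
      ring
    · have hb : Even b := Int.not_odd_iff_even.mp (fun h => hΔ ((parity_bridge a b c).mpr h))
      obtain ⟨B, hB⟩ := hb
      have hB' : b = 2*B := by omega
      rw [hs, if_neg hΔ]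
      subst hB'
      rw [closure_index_lat2_even a c B hn hprim] at key
      have ht : 0 < (8*((2*B)*((2*B)^2+4*a*c))).natAbs :=
        Int.natAbs_pos.mpr (mul_ne_zero (by norm_num) hn)
      apply Nat.eq_of_mul_eq_mul_right ht
      rw [mul_assoc, key]
      simp only [Int.natAbs_mul]
      ring
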